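/- Let a, b, c > 0 and α, β, γ ∈ (0,π) be real numbers. Then the three equations a·cos β + b·cos α − c = 0, b·sin α − a·sin β = 0 and α + β + γ − π = 0 hold if and only if there exist affinely independent points A, B, C in the euclidean plane ℝ² with dist(B,C) = a, dist(C,A) = b, dist(A,B) = c, and undirected angles ∠BAC = α, ∠ABC = β, ∠ACB = γ (i.e. a, b, c are the edgelengths of a nondegenerate euclidean triangle with respectively opposite angles α, β, γ). -/

import Mathlib

open Real EuclideanGeometry


noncomputable def ev (x y : ℝ) : EuclideanSpace ℝ (Fin 2) :=
  (WithLp.equiv 2 (Fin 2 → ℝ)).symm ![x, y]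

lemma ev_inner (x1 y1 x2 y2 : ℝ) :
    (inner ℝ (ev x1 y1) (ev x2 y2) : ℝ) = x1*x2 + y1*y2 := by
  simp [ev, PiLp.inner_apply, Fin.sum_univ_two]
  ring

lemma ev_sub (x1 y1 x2 y2 : ℝ) : ev x1 y1 - ev x2 y2 = ev (x1-x2) (y1-y2) := by
  ext i; fin_cases i <;> simp [ev]

lemma ev_norm (x y : ℝ) : ‖ev x y‖ = Real.sqrt (x^2 + y^2) := by
  simp [ev, EuclideanSpace.norm_eq, Fin.sum_univ_two, sq_abs]

lemma angle_eq_of_cos {V : Type*} [NormedAddCommGroup V] [InnerProductSpace ℝ V]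
    (x y : V) (θ : ℝ) (hθ : θ ∈ Set.Icc 0 π)
    (h : Real.cos (InnerProductGeometry.angle x y) = Real.cos θ) :
    InnerProductGeometry.angle x y = θ :=
  Real.injOn_cos ⟨InnerProductGeometry.angle_nonneg x y, InnerProductGeometry.angle_le_pi x y⟩ hθ h

/-- For `a, b, c > 0` and `α, β, γ ∈ (0, π)`, the three equations
`a·cos β + b·cos α − c = 0`, `b·sin α − a·sin β = 0` and `α + β + γ − π = 0` hold
if and only if `a`, `b`, `c` are the edgelengths of a nondegenerate euclidean triangle
with respectively opposite angles `α`, `β`, `γ`. -/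
theorem stmt_0 (a b c α β γ : ℝ) (ha : 0 < a) (hb : 0 < b) (hc : 0 < c)
    (hα : α ∈ Set.Ioo 0 π) (hβ : β ∈ Set.Ioo 0 π) (hγ : γ ∈ Set.Ioo 0 π) :
    (a * Real.cos β + b * Real.cos α - c = 0 ∧
      b * Real.sin α - a * Real.sin β = 0 ∧
      α + β + γ - π = 0) ↔
    ∃ A B C : EuclideanSpace ℝ (Fin 2), AffineIndependent ℝ ![A, B, C] ∧
      dist B C = a ∧ dist C A = b ∧ dist A B = c ∧
      ∠ B A C = α ∧ ∠ A B C = β ∧ ∠ A C B = γ := by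
  have hsinα : 0 < Real.sin α := Real.sin_pos_of_pos_of_lt_pi hα.1 hα.2
  have hsinβ : 0 < Real.sin β := Real.sin_pos_of_pos_of_lt_pi hβ.1 hβ.2
  constructor
  · rintro ⟨h1, h2, h3⟩
    set A := ev 0 0 with hA
    set B := ev c 0 with hB
    set C := ev (b * Real.cos α) (b * Real.sin α) with hC
    have pyth := Real.sin_sq_add_cos_sq α
    have pythβ := Real.sin_sq_add_cos_sq β
    have nBA : ‖B - A‖ = c := by
      rw [hA, hB, ev_sub, ev_norm]
      rw [show (c - 0)^2 + (0 - 0 : ℝ)^2 = c^2 by ring, Real.sqrt_sq hc.le]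
    have nCA : ‖C - A‖ = b := by
      rw [hA, hC, ev_sub, ev_norm]
      rw [show (b * Real.cos α - 0)^2 + (b * Real.sin α - 0)^2 = b^2 by linear_combination b^2 * pyth,
        Real.sqrt_sq hb.le]
    have nCB : ‖C - B‖ = a := by
      rw [hB, hC, ev_sub, ev_norm]
      rw [show (b * Real.cos α - c)^2 + (b * Real.sin α - 0)^2 = a^2 by
        linear_combination (a * Real.cos β + b * Real.cos α - c - 2*a*Real.cos β) * h1
          + (b * Real.sin α - a * Real.sin β + 2*a*Real.sin β) * h2 + a^2 * pythβ,
        Real.sqrt_sq ha.le]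
    have dAB : dist A B = c := by rw [dist_eq_norm, ← norm_neg, neg_sub]; exact nBA
    have dCA : dist C A = b := by rw [dist_eq_norm]; exact nCA
    have dBC : dist B C = a := by rw [dist_eq_norm, ← norm_neg, neg_sub]; exact nCB
    have aA : ∠ B A C = α := by
      show InnerProductGeometry.angle (B -ᵥ A) (C -ᵥ A) = α
      rw [vsub_eq_sub, vsub_eq_sub]
      apply angle_eq_of_cos _ _ _ ⟨hα.1.le, hα.2.le⟩
      rw [InnerProductGeometry.cos_angle, nBA, nCA, hA, hB, hC, ev_sub, ev_sub, ev_inner]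
      field_simp
      ring
    have aB : ∠ A B C = β := by
      show InnerProductGeometry.angle (A -ᵥ B) (C -ᵥ B) = β
      rw [vsub_eq_sub, vsub_eq_sub]
      apply angle_eq_of_cos _ _ _ ⟨hβ.1.le, hβ.2.le⟩
      rw [InnerProductGeometry.cos_angle, ← norm_neg (A - B), neg_sub, nBA, nCB,
        hA, hB, hC, ev_sub, ev_sub, ev_inner]
      have : (0 - c) * (b * Real.cos α - c) + (0 - 0) * (b * Real.sin α - 0)
          = c * a * Real.cos β := by linear_combination (-c) * h1
      rw [this]
      field_simp
    have hABne : A ≠ B := fun h => by rw [h, dist_self] at dAB; exact hc.ne dAB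
    have hCAne : C ≠ A := fun h => by rw [h, dist_self] at dCA; exact hb.ne dCA
    have aC : ∠ A C B = γ := by
      have sum := EuclideanGeometry.angle_add_angle_add_angle_eq_pi C (Ne.symm hABne)
      rw [aB, EuclideanGeometry.angle_comm B C A, EuclideanGeometry.angle_comm C A B, aA] at sum
      linarith
    have hind : AffineIndependent ℝ ![A, B, C] := by
      rw [affineIndependent_iff_not_collinear_set]
      intro hcol
      have hcol' : Collinear ℝ ({B, A, C} : Set (EuclideanSpace ℝ (Fin 2))) := by
        have : ({B, A, C} : Set (EuclideanSpace ℝ (Fin 2))) = {A, B, C} := by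
          ext x; simp; tauto
        rw [this]; exact hcol
      rcases EuclideanGeometry.collinear_iff_eq_or_eq_or_angle_eq_zero_or_angle_eq_pi.mp hcol'
        with h | h | h | h
      · exact hABne h.symm
      · exact hCAne h
      · rw [aA] at h; exact hα.1.ne' h
      · rw [aA] at h; exact hα.2.ne h
    exact ⟨A, B, C, hind, dBC, dCA, dAB, aA, aB, aC⟩
  · rintro ⟨A, B, C, hind, dBC, dCA, dAB, aA, aB, aC⟩
    have hAB : A ≠ B := by
      intro h; rw [h, dist_self] at dAB; exact hc.ne dAB
    have hCA : C ≠ A := by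
      intro h; rw [h, dist_self] at dCA; exact hb.ne dCA
    have hBC : B ≠ C := by
      intro h; rw [h, dist_self] at dBC; exact ha.ne dBC
    -- law of cosines at A and at B
    have lawA := EuclideanGeometry.law_cos B A C
    have lawB := EuclideanGeometry.law_cos A B C
    rw [dist_comm B A, dAB, dCA, dBC, aA] at lawA
    rw [dist_comm C B, dAB, dBC, dist_comm A C, dCA, aB] at lawB
    -- lawA : a*a = c*c + b*b - 2*c*b*cos α
    -- lawB : b*b = c*c + a*a - 2*c*a*cos β
    have e1 : a * Real.cos β + b * Real.cos α - c = 0 := by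
      have h2c : 2 * c * (a * Real.cos β + b * Real.cos α - c) = 0 := by nlinarith [lawA, lawB]
      have := mul_ne_zero (by norm_num : (2:ℝ) ≠ 0) hc.ne'
      field_simp at h2c
      nlinarith [h2c]
    have sum := EuclideanGeometry.angle_add_angle_add_angle_eq_pi C (Ne.symm hAB)
    rw [aB, EuclideanGeometry.angle_comm B C A, aC, EuclideanGeometry.angle_comm C A B, aA] at sum
    refine ⟨e1, ?_, by linarith⟩
    have cA : Real.cos α = (c^2 + b^2 - a^2) / (2*(c*b)) := by
      field_simp; nlinarith [lawA]
    have cB : Real.cos β = (c^2 + a^2 - b^2) / (2*(c*a)) := by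
      field_simp; nlinarith [lawB]
    have key : (b * Real.sin α)^2 = (a * Real.sin β)^2 := by
      rw [mul_pow, mul_pow, Real.sin_sq, Real.sin_sq, cA, cB]
      field_simp
      ring
    have := (sq_eq_sq₀ (by positivity) (by positivity)).mp key
    linarith
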